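/- Let f(n) = √(2n) + (1/6)·log n. There is a constant C such that for every D > 0 and all integers n ≥ 1 and 1 ≤ k ≤ D√n, one has | Σ_{i=1}^{k-1} (f(n) − f(n−i)) − [ (k−1)k/(2√(2n)) + (k−1)k(2k−1)/(24n√(2n)) + (k−1)k/(12n) ] | ≤ C(D)·n^{−1/2}, where C(D) depends only on D. -/

import Mathlib

open Finset
noncomputable def f (n : ℕ) : ℝ := Real.sqrt (2 * n) + (1 / 6) * Real.log n

lemma sqrt_one_sub_le (x : ℝ) (hx0 : 0 ≤ x) (hx1 : x ≤ 1) :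
    Real.sqrt (1 - x) ≤ 1 - x/2 - x^2/8 := by
  have h : 0 ≤ 1 - x/2 - x^2/8 := by nlinarith
  rw [show (1:ℝ) - x/2 - x^2/8 = Real.sqrt ((1 - x/2 - x^2/8)^2) from (Real.sqrt_sq h).symm]
  apply Real.sqrt_le_sqrt; nlinarith

lemma le_sqrt_one_sub (x : ℝ) (hx0 : 0 ≤ x) (hx1 : x ≤ 1) :
    1 - x/2 - x^2/8 - (3/8)*x^3 ≤ Real.sqrt (1 - x) := by
  rcases le_or_gt (1 - x/2 - x^2/8 - (3/8)*x^3) 0 with h | h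
  · exact h.trans (Real.sqrt_nonneg _)
  · rw [show (1:ℝ) - x/2 - x^2/8 - (3/8)*x^3
        = Real.sqrt ((1 - x/2 - x^2/8 - (3/8)*x^3)^2) from (Real.sqrt_sq h.le).symm]
    apply Real.sqrt_le_sqrt
    nlinarith [pow_nonneg hx0 3, pow_nonneg hx0 4, pow_nonneg hx0 5, pow_nonneg hx0 6, sq_nonneg x]

lemma log_one_sub_est (x : ℝ) (hx0 : 0 ≤ x) (hx1 : x ≤ 1/2) :
    |Real.log (1 - x) + x| ≤ 2*x^2 := by
  have h1 : (0:ℝ) < 1 - x := by linarith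
  have hub : Real.log (1 - x) ≤ -x := by
    have := Real.log_le_sub_one_of_pos h1; linarith
  have hlb : -x - 2*x^2 ≤ Real.log (1 - x) := by
    have h2 : Real.log (1-x) = - Real.log (1/(1-x)) := by
      rw [Real.log_div one_ne_zero (ne_of_gt h1), Real.log_one]; ring
    have h3 := Real.log_le_sub_one_of_pos (show (0:ℝ) < 1/(1-x) by positivity)
    have h4 : 1/(1-x) - 1 ≤ x + 2*x^2 := by
      rw [div_sub_one (ne_of_gt h1), div_le_iff₀ h1]; nlinarith
    rw [h2]; linarith
  rw [abs_le]; constructor <;> nlinarith [sq_nonneg x]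

lemma term_est (n i : ℕ) (hi : 1 ≤ i) (h2 : 2*i ≤ n) :
    |(f n - f (n - i)) - ((i:ℝ)/Real.sqrt (2*n) + (i:ℝ)^2/(4*n*Real.sqrt (2*n)) + (i:ℝ)/(6*n))|
      ≤ (3/8)*Real.sqrt (2*(n:ℝ)) * ((i:ℝ)/n)^3 + (1/3)*((i:ℝ)/n)^2 := by
  have hn : 0 < n := by omega
  have hin : i ≤ n := by omega
  have hnR : (0:ℝ) < n := by exact_mod_cast hn
  have hni : ((n - i : ℕ):ℝ) = (n:ℝ) - i := Nat.cast_sub hin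
  obtain ⟨x, hxdef⟩ : ∃ x : ℝ, x = (i:ℝ)/n := ⟨_, rfl⟩
  have hx0 : 0 ≤ x := by rw [hxdef]; positivity
  have hx12 : x ≤ 1/2 := by
    rw [hxdef, div_le_iff₀ hnR]
    have : (2*i : ℝ) ≤ n := by exact_mod_cast h2
    linarith
  have hx1 : x ≤ 1 := by linarith
  have hxn : (i:ℝ) = x * n := by rw [hxdef]; field_simp
  obtain ⟨s, hsdef⟩ : ∃ s : ℝ, s = Real.sqrt (2*(n:ℝ)) := ⟨_, rfl⟩
  have hs0 : 0 < s := hsdef ▸ Real.sqrt_pos.2 (by positivity)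
  have hs2 : s^2 = 2*n := hsdef ▸ Real.sq_sqrt (by positivity)
  -- sqrt part
  have hsplit : (2:ℝ) * ((n:ℝ) - i) = 2*(n:ℝ) * (1 - x) := by rw [hxn]; ring
  have hsqrt : Real.sqrt (2 * ((n:ℝ) - i)) = s * Real.sqrt (1 - x) := by
    rw [hsplit, Real.sqrt_mul (by positivity), hsdef]
  have hmainsq : (i:ℝ)/s + (i:ℝ)^2/(4*n*s) = s*(x/2 + x^2/8) := by
    rw [hxn]
    field_simp
    rw [show (n:ℝ) = s^2/2 by linarith]; ring
  have hsqrtbd : |Real.sqrt (2*(n:ℝ)) - Real.sqrt (2 * ((n:ℝ) - i))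
      - ((i:ℝ)/s + (i:ℝ)^2/(4*n*s))| ≤ (3/8)*s*x^3 := by
    rw [hsqrt, hmainsq, ← hsdef]
    have h1 := sqrt_one_sub_le x hx0 hx1
    have h2' := le_sqrt_one_sub x hx0 hx1
    rw [show s - s*Real.sqrt (1-x) - s*(x/2+x^2/8)
        = s * ((1 - Real.sqrt (1-x)) - (x/2 + x^2/8)) by ring, abs_mul,
        abs_of_pos hs0]
    have hq : |(1 - Real.sqrt (1-x)) - (x/2 + x^2/8)| ≤ (3/8)*x^3 := by
      rw [abs_le]; constructor <;> nlinarith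
    calc s * |(1 - Real.sqrt (1-x)) - (x/2 + x^2/8)| ≤ s * ((3/8)*x^3) := by
          exact mul_le_mul_of_nonneg_left hq hs0.le
      _ = (3/8)*s*x^3 := by ring
  -- log part
  have hnipos : (1:ℝ) ≤ (n:ℝ) - i := by
    have ha : (2*i:ℝ) ≤ n := by exact_mod_cast h2
    have hb : (1:ℝ) ≤ i := by exact_mod_cast hi
    linarith
  have hlogsplit : Real.log ((n:ℝ) - i) = Real.log n + Real.log (1 - x) := by
    rw [show (n:ℝ) - i = n * (1 - x) by rw [hxn]; ring,
      Real.log_mul (ne_of_gt hnR) (by nlinarith)]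
  have hlogbd : |(1/6) * Real.log (n:ℝ) - (1/6) * Real.log ((n:ℝ) - i) - (i:ℝ)/(6*n)|
      ≤ (1/3)*x^2 := by
    rw [hlogsplit, show (1/6) * Real.log (n:ℝ) - (1/6)*(Real.log (n:ℝ) + Real.log (1-x)) - (i:ℝ)/(6*n)
        = -(1/6) * (Real.log (1-x) + x) by rw [hxn]; field_simp; ring, abs_mul]
    have := log_one_sub_est x hx0 hx12
    rw [show |(-((1:ℝ)/6))| = 1/6 by rw [abs_neg]; norm_num]
    linarith
  -- combine
  have hfn : f n - f (n - i) = (Real.sqrt (2*(n:ℝ)) - Real.sqrt (2 * ((n:ℝ) - i)))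
      + ((1/6) * Real.log (n:ℝ) - (1/6) * Real.log ((n:ℝ) - i)) := by
    simp only [f, hni]
    ring
  rw [hfn, ← hxdef]
  have hre : Real.sqrt (2*(n:ℝ)) - Real.sqrt (2 * ((n:ℝ) - i))
        + ((1/6) * Real.log (n:ℝ) - (1/6) * Real.log ((n:ℝ) - i))
      - ((i:ℝ)/Real.sqrt (2*(n:ℝ)) + (i:ℝ)^2/(4*n*Real.sqrt (2*(n:ℝ))) + (i:ℝ)/(6*n))
      = (Real.sqrt (2*(n:ℝ)) - Real.sqrt (2 * ((n:ℝ) - i)) - ((i:ℝ)/s + (i:ℝ)^2/(4*n*s)))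
        + ((1/6) * Real.log (n:ℝ) - (1/6) * Real.log ((n:ℝ) - i) - (i:ℝ)/(6*n)) := by
    rw [hsdef]; ring
  rw [hre]
  rw [← hsdef] at hsqrtbd ⊢
  refine (abs_add_le _ _).trans ?_
  exact add_le_add hsqrtbd hlogbd

lemma sum_Icc_id (m : ℕ) : ∑ i ∈ Icc 1 m, (i:ℝ) = m*(m+1)/2 := by
  induction m with
  | zero => simp
  | succ p ih => rw [Finset.sum_Icc_succ_top (by omega)]; push_cast; rw [ih]; ring

lemma sum_Icc_sq (m : ℕ) : ∑ i ∈ Icc 1 m, (i:ℝ)^2 = m*(m+1)*(2*m+1)/6 := by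
  induction m with
  | zero => simp
  | succ p ih => rw [Finset.sum_Icc_succ_top (by omega)]; push_cast; rw [ih]; ring

lemma f_nonneg (n : ℕ) : 0 ≤ f n := by
  unfold f
  rcases Nat.eq_zero_or_pos n with h | h
  · simp [h]
  · have : (0:ℝ) ≤ Real.log n := Real.log_nonneg (by exact_mod_cast h)
    positivity

lemma f_mono {a b : ℕ} (h : a ≤ b) : f a ≤ f b := by
  unfold f
  have h1 : Real.sqrt (2*(a:ℝ)) ≤ Real.sqrt (2*(b:ℝ)) := by
    apply Real.sqrt_le_sqrt; have : (a:ℝ) ≤ b := by exact_mod_cast h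
    linarith
  have h2 : Real.log (a:ℝ) ≤ Real.log (b:ℝ) := by
    rcases Nat.eq_zero_or_pos a with h0 | h0
    · subst h0; simp
      rcases Nat.eq_zero_or_pos b with h0' | h0'
      · simp [h0']
      · exact Real.log_nonneg (by exact_mod_cast h0')
    · exact Real.log_le_log (by exact_mod_cast h0) (by exact_mod_cast h)
  linarith

set_option maxHeartbeats 1000000 in
theorem stmt_11 :
    ∀ D : ℝ, 0 < D → ∃ C : ℝ, 0 < C ∧
      ∀ n k : ℕ, 1 ≤ n → 1 ≤ k → (k : ℝ) ≤ D * Real.sqrt n →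
        |(∑ i ∈ Finset.Icc 1 (k - 1), (f n - f (n - i))) -
          (((k : ℝ) - 1) * k / (2 * Real.sqrt (2 * n))
            + ((k : ℝ) - 1) * k * (2 * k - 1) / (24 * n * Real.sqrt (2 * n))
            + ((k : ℝ) - 1) * k / (12 * n))| ≤ C / Real.sqrt n := by
  intro D hD
  refine ⟨100*(D+1)^5, by positivity, ?_⟩
  intro n k hn hk hkD
  have hnR : (1:ℝ) ≤ n := by exact_mod_cast hn
  have hnR0 : (0:ℝ) < n := by linarith
  have hs0 : (0:ℝ) < Real.sqrt n := Real.sqrt_pos.2 (by linarith)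
  have hs1 : (1:ℝ) ≤ Real.sqrt n := by
    rw [show (1:ℝ) = Real.sqrt 1 by simp]
    exact Real.sqrt_le_sqrt hnR
  have hss : (Real.sqrt (n:ℝ))^2 = n := Real.sq_sqrt (by linarith)
  have hkR : (1:ℝ) ≤ k := by exact_mod_cast hk
  have hts : Real.sqrt (n:ℝ) ≤ Real.sqrt (2*(n:ℝ)) := Real.sqrt_le_sqrt (by linarith)
  have ht2 : Real.sqrt (2*(n:ℝ)) ≤ 2 * Real.sqrt n := by
    have h1 : Real.sqrt (2*(n:ℝ)) ≤ Real.sqrt ((2*Real.sqrt n)^2) :=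
      Real.sqrt_le_sqrt (by nlinarith)
    rwa [Real.sqrt_sq (by positivity)] at h1
  have ht0 : (0:ℝ) < Real.sqrt (2*(n:ℝ)) := lt_of_lt_of_le hs0 hts
  rcases eq_or_lt_of_le hk with hk1 | hk2
  · -- k = 1
    rw [← hk1]
    norm_num
    positivity
  -- k ≥ 2
  have hm1 : 1 ≤ k - 1 := by omega
  have hkm : (k:ℝ) = ((k-1 : ℕ):ℝ) + 1 := by
    have : ((k-1+1 : ℕ):ℝ) = k := by congr 1; omega
    push_cast at this; linarith
  by_cases hcase : 2*(k-1) ≤ n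
  · -- Case A
    have hM : ((k:ℝ) - 1) * k / (2 * Real.sqrt (2 * (n:ℝ)))
            + ((k:ℝ) - 1) * k * (2 * (k:ℝ) - 1) / (24 * n * Real.sqrt (2 * (n:ℝ)))
            + ((k:ℝ) - 1) * k / (12 * n)
        = ∑ i ∈ Icc 1 (k-1), ((i:ℝ)/Real.sqrt (2*(n:ℝ))
            + (i:ℝ)^2/(4*n*Real.sqrt (2*(n:ℝ))) + (i:ℝ)/(6*n)) := by
      rw [Finset.sum_add_distrib, Finset.sum_add_distrib, ← Finset.sum_div,
        ← Finset.sum_div, ← Finset.sum_div, sum_Icc_id, sum_Icc_sq, hkm]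
      ring
    rw [hM, ← Finset.sum_sub_distrib]
    have hB : ∀ i ∈ Icc 1 (k-1),
        |(f n - f (n - i)) - ((i:ℝ)/Real.sqrt (2*(n:ℝ))
          + (i:ℝ)^2/(4*n*Real.sqrt (2*(n:ℝ))) + (i:ℝ)/(6*n))|
        ≤ (3/8)*Real.sqrt (2*(n:ℝ)) * ((k:ℝ)/n)^3 + (1/3)*((k:ℝ)/n)^2 := by
      intro i hi
      rw [Finset.mem_Icc] at hi
      have h2i : 2*i ≤ n := by omega
      refine (term_est n i hi.1 h2i).trans ?_
      have hik : (i:ℝ) ≤ k := by exact_mod_cast (by omega : i ≤ k)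
      gcongr
    calc |∑ i ∈ Icc 1 (k-1), ((f n - f (n - i)) - ((i:ℝ)/Real.sqrt (2*(n:ℝ))
            + (i:ℝ)^2/(4*n*Real.sqrt (2*(n:ℝ))) + (i:ℝ)/(6*n)))|
        ≤ ∑ i ∈ Icc 1 (k-1), |(f n - f (n - i)) - ((i:ℝ)/Real.sqrt (2*(n:ℝ))
            + (i:ℝ)^2/(4*n*Real.sqrt (2*(n:ℝ))) + (i:ℝ)/(6*n))| :=
          Finset.abs_sum_le_sum_abs _ _
      _ ≤ ∑ _i ∈ Icc 1 (k-1), ((3/8)*Real.sqrt (2*(n:ℝ)) * ((k:ℝ)/n)^3 + (1/3)*((k:ℝ)/n)^2) :=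
          Finset.sum_le_sum hB
      _ = ((k-1 : ℕ):ℝ) * ((3/8)*Real.sqrt (2*(n:ℝ)) * ((k:ℝ)/n)^3 + (1/3)*((k:ℝ)/n)^2) := by
          rw [Finset.sum_const, Nat.card_Icc, nsmul_eq_mul]
          norm_num
      _ ≤ (k:ℝ) * ((3/8)*(2*Real.sqrt n) * ((k:ℝ)/n)^3 + (1/3)*((k:ℝ)/n)^2) := by
          have : ((k-1:ℕ):ℝ) ≤ k := by exact_mod_cast (by omega : k - 1 ≤ k)
          gcongr
      _ ≤ (D*Real.sqrt n) * ((3/8)*(2*Real.sqrt n) * (D/Real.sqrt n)^3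
            + (1/3)*(D/Real.sqrt n)^2) := by
          have hkn : (k:ℝ)/n ≤ D/Real.sqrt n := by
            rw [div_le_div_iff₀ hnR0 hs0]
            nlinarith
          gcongr
      _ = (3/4*D^4 + 1/3*D^3)/Real.sqrt n := by
          field_simp
          ring
      _ ≤ (100*(D+1)^5)/Real.sqrt n := by
          gcongr
          nlinarith [pow_pos hD 5, pow_pos hD 4, pow_pos hD 3, pow_pos hD 2]

  · -- Case B
    push_neg at hcase
    have hn2k : (n:ℝ) < 2*k := by exact_mod_cast (by omega : n < 2*k)
    have hsD : Real.sqrt (n:ℝ) ≤ 2*D := by nlinarith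
    have hS0 : 0 ≤ ∑ i ∈ Icc 1 (k-1), (f n - f (n-i)) :=
      Finset.sum_nonneg (fun i _ => by linarith [f_mono (Nat.sub_le n i)])
    have hSub : ∑ i ∈ Icc 1 (k-1), (f n - f (n-i)) ≤ ((k-1:ℕ):ℝ) * f n := by
      calc ∑ i ∈ Icc 1 (k-1), (f n - f (n-i)) ≤ ∑ _i ∈ Icc 1 (k-1), f n :=
            Finset.sum_le_sum (fun i _ => by linarith [f_nonneg (n-i)])
        _ = ((k-1:ℕ):ℝ) * f n := by
            rw [Finset.sum_const, Nat.card_Icc, nsmul_eq_mul]; norm_num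
    have hfn : f n ≤ 2*Real.sqrt (n:ℝ) + (n:ℝ)/6 := by
      unfold f
      have := Real.log_le_sub_one_of_pos hnR0
      linarith [ht2]
    have hkR2 : ((k-1:ℕ):ℝ) ≤ k := by exact_mod_cast (by omega : k-1 ≤ k)
    have hfn0 := f_nonneg n
    have hkmul : (k:ℝ)*(k:ℝ) ≤ (D*Real.sqrt n)*(D*Real.sqrt n) :=
      mul_le_mul hkD hkD (by linarith) (by positivity)
    have hM1 : ((k:ℝ)-1)*k/(2*Real.sqrt (2*(n:ℝ))) ≤ D^2*Real.sqrt n/2 := by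
      rw [div_le_iff₀ (by positivity)]
      nlinarith [hts, hs0, mul_nonneg (mul_nonneg (sq_nonneg D) hs0.le)
        (sub_nonneg.2 hts)]
    have hM2 : ((k:ℝ)-1)*k*(2*(k:ℝ)-1)/(24*n*Real.sqrt (2*(n:ℝ))) ≤ D^3/12 := by
      rw [div_le_iff₀ (by positivity)]
      have hk3 : (k:ℝ)^3 ≤ (D*Real.sqrt n)^3 := pow_le_pow_left₀ (by linarith) hkD 3
      have hKsq : (k:ℝ) ≤ (k:ℝ)^2 := by nlinarith
      have h5 : D^3 * Real.sqrt (n:ℝ)^3 = D^3 * n * Real.sqrt (n:ℝ) := by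
        linear_combination (D^3*Real.sqrt (n:ℝ)) * hss
      have h6 : 2*D^3*(n:ℝ)*Real.sqrt (n:ℝ) ≤ 2*D^3*(n:ℝ)*Real.sqrt (2*(n:ℝ)) :=
        mul_le_mul_of_nonneg_left hts (by positivity)
      nlinarith [hk3, hKsq, h5, h6]
    have hM3 : ((k:ℝ)-1)*k/(12*(n:ℝ)) ≤ D^2/12 := by
      rw [div_le_iff₀ (by positivity)]
      nlinarith [hss]
    have hM0 : 0 ≤ ((k:ℝ) - 1) * k / (2 * Real.sqrt (2 * (n:ℝ)))
            + ((k:ℝ) - 1) * k * (2 * (k:ℝ) - 1) / (24 * n * Real.sqrt (2 * (n:ℝ)))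
            + ((k:ℝ) - 1) * k / (12 * n) := by
      have h0 : (0:ℝ) ≤ (k:ℝ) - 1 := by linarith
      have h1 : (0:ℝ) ≤ 2*(k:ℝ) - 1 := by linarith
      have h2 : (0:ℝ) ≤ (k:ℝ) := by linarith
      refine add_nonneg (add_nonneg ?_ ?_) ?_ <;>
        exact div_nonneg (by positivity) (by positivity)
    rw [le_div_iff₀ hs0]
    have habs : |(∑ i ∈ Icc 1 (k-1), (f n - f (n-i)))
        - (((k:ℝ) - 1) * k / (2 * Real.sqrt (2 * (n:ℝ)))
          + ((k:ℝ) - 1) * k * (2 * (k:ℝ) - 1) / (24 * n * Real.sqrt (2 * (n:ℝ)))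
          + ((k:ℝ) - 1) * k / (12 * n))|
        ≤ (k:ℝ)*(2*Real.sqrt (n:ℝ) + (n:ℝ)/6) + (D^2*Real.sqrt (n:ℝ)/2 + D^3/12 + D^2/12) := by
      refine (abs_sub _ _).trans ?_
      rw [abs_of_nonneg hS0, abs_of_nonneg hM0]
      have hf : ((k-1:ℕ):ℝ)*f n ≤ (k:ℝ)*(2*Real.sqrt (n:ℝ) + (n:ℝ)/6) :=
        mul_le_mul hkR2 hfn hfn0 (by linarith)
      linarith [hSub, hM1, hM2, hM3]
    refine le_trans (mul_le_mul_of_nonneg_right habs hs0.le) ?_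
    clear habs hSub hS0 hM0 hM1 hM2 hM3 hfn hfn0 hkmul
    have hs2 : Real.sqrt (n:ℝ)^2 ≤ (2*D)^2 := pow_le_pow_left₀ hs0.le hsD 2
    have hs3 : Real.sqrt (n:ℝ)^3 ≤ (2*D)^3 := pow_le_pow_left₀ hs0.le hsD 3
    have hs4 : Real.sqrt (n:ℝ)^4 ≤ (2*D)^4 := pow_le_pow_left₀ hs0.le hsD 4
    have hksn3 : (k:ℝ)*Real.sqrt (n:ℝ)^3 ≤ D*Real.sqrt (n:ℝ)^4 := by
      have := mul_le_mul_of_nonneg_right hkD (pow_nonneg hs0.le 3)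
      nlinarith [this]
    have hksn : (k:ℝ)*Real.sqrt (n:ℝ) ≤ D*Real.sqrt (n:ℝ)^2 := by
      nlinarith [mul_le_mul_of_nonneg_right hkD hs0.le]
    have h1 : (k:ℝ)*Real.sqrt (n:ℝ)^2 ≤ D*Real.sqrt (n:ℝ)^3 := by
      nlinarith [mul_le_mul_of_nonneg_right hkD (sq_nonneg (Real.sqrt (n:ℝ)))]
    have h2 : D*Real.sqrt (n:ℝ)^3 ≤ 8*D^4 := by
      nlinarith [mul_le_mul_of_nonneg_left hs3 hD.le]
    have h3 : D*Real.sqrt (n:ℝ)^4 ≤ 16*D^5 := by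
      nlinarith [mul_le_mul_of_nonneg_left hs4 hD.le]
    have h4 : D^2*Real.sqrt (n:ℝ)^2 ≤ 4*D^4 := by
      nlinarith [mul_le_mul_of_nonneg_left hs2 (sq_nonneg D)]
    have h5 : D^3*Real.sqrt (n:ℝ) ≤ 2*D^4 := by
      nlinarith [mul_le_mul_of_nonneg_left hsD (pow_nonneg hD.le 3)]
    have h6 : D^2*Real.sqrt (n:ℝ) ≤ 2*D^3 := by
      nlinarith [mul_le_mul_of_nonneg_left hsD (sq_nonneg D)]
    calc ((k:ℝ)*(2*Real.sqrt (n:ℝ) + (n:ℝ)/6) + (D^2*Real.sqrt (n:ℝ)/2 + D^3/12 + D^2/12))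
            * Real.sqrt (n:ℝ)
        = 2*(k:ℝ)*Real.sqrt (n:ℝ)^2 + (k:ℝ)*Real.sqrt (n:ℝ)^3/6
          + D^2*Real.sqrt (n:ℝ)^2/2 + D^3*Real.sqrt (n:ℝ)/12 + D^2*Real.sqrt (n:ℝ)/12 := by
          linear_combination (-((k:ℝ)*Real.sqrt (n:ℝ)/6)) * hss
      _ ≤ 16*D^4 + (16*D^5)/6 + 2*D^4 + D^4/6 + D^3/6 := by
          linarith [h1, h2, h3, h4, h5, h6, hksn3]
      _ ≤ 100*(D+1)^5 := by
          nlinarith [pow_pos hD 5, pow_pos hD 4, pow_pos hD 3, pow_pos hD 2, hD]
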